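/- Let x0 > 0 be the equilibrium swap value of a fee-adjusted constant-product AMM with φ < 1, and let G(x) = p1·x·φ·r1/(r0 + φ·x) − p0·x be the gain function. Then for all x > x0: G(x0) > G(x) if and only if x > x0/φ. -/

import Mathlib

theorem stmt15 (φ r0 r1 p0 p1 x0 : ℝ) (hφ0 : 0 < φ) (hφ1 : φ < 1)
    (hr0 : 0 < r0) (hr1 : 0 < r1) (hp0 : 0 < p0) (hp1 : 0 < p1)
    (hx0 : x0 = (-(Real.sqrt p0) * r0 * (1 + φ) +
      Real.sqrt r0 * Real.sqrt (p0 * r0 * (1 - φ)^2 + 4 * p1 * r1 * φ^2)) /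
      (2 * Real.sqrt p0 * φ))
    (hpos : 0 < x0) :
    ∀ x : ℝ, x > x0 →
      (p1 * x0 * (φ * r1 / (r0 + φ * x0)) - p0 * x0 >
        p1 * x * (φ * r1 / (r0 + φ * x)) - p0 * x ↔ x > x0 / φ) := by
  have hs2 : Real.sqrt p0 * Real.sqrt p0 = p0 := Real.mul_self_sqrt hp0.le
  have ht2 : Real.sqrt r0 * Real.sqrt r0 = r0 := Real.mul_self_sqrt hr0.le
  have hu2 : Real.sqrt (p0 * r0 * (1 - φ)^2 + 4 * p1 * r1 * φ^2) *
      Real.sqrt (p0 * r0 * (1 - φ)^2 + 4 * p1 * r1 * φ^2) =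
      p0 * r0 * (1 - φ)^2 + 4 * p1 * r1 * φ^2 :=
    Real.mul_self_sqrt (by positivity)
  have hsp : 0 < Real.sqrt p0 := Real.sqrt_pos.2 hp0
  have h1 : 2 * Real.sqrt p0 * φ * x0 = -(Real.sqrt p0) * r0 * (1 + φ) +
      Real.sqrt r0 * Real.sqrt (p0 * r0 * (1 - φ)^2 + 4 * p1 * r1 * φ^2) := by
    rw [hx0]; field_simp
  have h2 : (2 * Real.sqrt p0 * φ * x0 + Real.sqrt p0 * r0 * (1 + φ)) ^ 2 =
      (Real.sqrt r0 * Real.sqrt (p0 * r0 * (1 - φ)^2 + 4 * p1 * r1 * φ^2)) ^ 2 := by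
    rw [h1]; ring
  have key4 : 4 * φ * (p0 * ((r0 + φ * x0) * (r0 + x0))) = 4 * φ * (p1 * φ * r1 * r0) := by
    linear_combination h2 - (2 * φ * x0 + r0 * (1 + φ))^2 * hs2 +
      (Real.sqrt (p0 * r0 * (1 - φ)^2 + 4 * p1 * r1 * φ^2))^2 * ht2 + r0 * hu2
  have key : p0 * ((r0 + φ * x0) * (r0 + x0)) = p1 * φ * r1 * r0 :=
    mul_left_cancel₀ (by positivity : (4 : ℝ) * φ ≠ 0) key4
  intro x hx
  have hD0 : 0 < r0 + φ * x0 := by positivity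
  have hxpos : 0 < x := lt_trans hpos hx
  have hD : 0 < r0 + φ * x := by positivity
  have hid : (p1 * x0 * (φ * r1 / (r0 + φ * x0)) - p0 * x0) -
      (p1 * x * (φ * r1 / (r0 + φ * x)) - p0 * x) =
      (x - x0) * p0 * (φ * x - x0) / (r0 + φ * x) := by
    field_simp
    linear_combination (x - x0) * key
  constructor
  · intro h
    have hd : 0 < (x - x0) * p0 * (φ * x - x0) / (r0 + φ * x) := by
      rw [← hid]; linarith
    have h3 : 0 < (x - x0) * p0 * (φ * x - x0) :=
      (div_pos_iff.mp hd).elim (fun q => q.1) (fun q => absurd q.2 (by linarith))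
    have h4 : 0 < φ * x - x0 := by
      by_contra hc; push_neg at hc
      nlinarith [mul_pos (sub_pos.2 hx) hp0]
    rw [gt_iff_lt, div_lt_iff₀ hφ0]; linarith
  · intro h
    have h4 : 0 < φ * x - x0 := by
      rw [gt_iff_lt, div_lt_iff₀ hφ0] at h; linarith
    have hd : 0 < (x - x0) * p0 * (φ * x - x0) / (r0 + φ * x) := by
      apply div_pos _ hD
      have : 0 < x - x0 := sub_pos.2 hx
      positivity
    linarith [hid ▸ hd]
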